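/- arXiv:2504.00165 — 3 statements merged into one kernel-verified Lean document; each statement's English description precedes it below -/
import Mathlib

section
/- Let a < b be reals, 𝓘 = [a,b], let ϕ : 𝓘 → ℝ^μ and h : 𝓘 → ℝ^ϰ be measurable with square-integrable components, g(τ) = [ϕ(τ); h(τ)] ∈ ℝ^κ (κ = μ + ϰ), and assume 𝔥 = ∫_𝓘 h hᵀ dτ and 𝔈 = ∫_𝓘 ϕϕᵀ dτ − Γ 𝔥⁻¹ Γᵀ are positive definite, where Γ = ∫_𝓘 ϕ hᵀ dτ. Let ε(τ) = ϕ(τ) − Γ 𝔥⁻¹ h(τ), Γ̂ = [Γ 𝔥⁻¹; I_ϰ], Ĩ = [I_μ; O_{ϰ,μ}], T = Γ̂ √𝔥 ∈ ℝ^{κ×ϰ} and T̃ = Ĩ √𝔈 ∈ ℝ^{κ×μ}, where √· denotes the positive-definite matrix square root. Then for any matrices ∈ ℝ^{n×κn}, B̂ ∈ ℝ^{n×κp}, K ∈ ℝ^{p×n} and every τ ∈ 𝓘: [Â + B̂ (I_κ ⊗ K)] (g(τ) ⊗ I_n) = [Â (T ⊗ I_n) + B̂ (T ⊗ K)] (√𝔥⁻¹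 h(τ) ⊗ I_n) + [Â (T̃ ⊗ I_n) + B̂ (T̃ ⊗ K)] (√𝔈⁻¹ ε(τ) ⊗ I_n). -/
open MeasureTheory Matrix Classical
open scoped Kronecker

/-- The Kronecker product `g ⊗ I_n` of a column vector `g ∈ ℝ^κ`
(indexed by `κI`) with the `n × n` identity matrix. -/
noncomputable def vecKronId {κI : Type*} (g : κI → ℝ) (n : ℕ) :
    Matrix (κI × Fin n) (Fin n) ℝ :=
  fun ki j => g ki.1 * (1 : Matrix (Fin n) (Fin n) ℝ) ki.2 j

/-- The entrywise (cross-)Gram integral `∫_{[a,b]} ϕ(τ) h(τ)ᵀ dτ`. -/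
noncomputable def gramOn {μI ϰI : Type*} (a b : ℝ) (ϕ : ℝ → μI → ℝ) (h : ℝ → ϰI → ℝ) :
    Matrix μI ϰI ℝ :=
  fun i j => ∫ τ in Set.Icc a b, ϕ τ i * h τ j

/-- The positive semidefinite square root `√X` of a positive semidefinite
real matrix (junk value `0` if `X` is not positive semidefinite). -/
noncomputable def psdSqrt {m : Type*} [Fintype m] [DecidableEq m] (X : Matrix m m ℝ) :
    Matrix m m ℝ :=
  if hX : X.PosSemidef then
    (hX.1.eigenvectorUnitary : Matrix m m ℝ) * diagonal ((↑) ∘ Real.sqrt ∘ hX.1.eigenvalues) *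
      (star hX.1.eigenvectorUnitary : Matrix m m ℝ)
  else 0


/-- `v ⊗ N` for a column vector `v` and a matrix `N`. -/
noncomputable def kvMat {αI : Type*} {q n : ℕ} (v : αI → ℝ) (N : Matrix (Fin q) (Fin n) ℝ) :
    Matrix (αI × Fin q) (Fin n) ℝ :=
  fun ir j => v ir.1 * N ir.2 j

lemma vecKronId_eq_kvMat {αI : Type*} (v : αI → ℝ) (n : ℕ) :
    vecKronId v n = kvMat v (1 : Matrix (Fin n) (Fin n) ℝ) := rfl

lemma kron_mul_vecKronId {αI βI : Type*} [Fintype βI] {q n : ℕ}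
    (M : Matrix αI βI ℝ) (N : Matrix (Fin q) (Fin n) ℝ) (v : βI → ℝ) :
    (M ⊗ₖ N) * vecKronId v n = kvMat (M *ᵥ v) N := by
  ext ⟨i, r⟩ j
  simp only [Matrix.mul_apply, vecKronId, kvMat, Matrix.kroneckerMap_apply,
    Matrix.mulVec, dotProduct, Fintype.sum_prod_type, Matrix.one_apply]
  simp only [mul_ite, mul_one, mul_zero, Finset.sum_ite_eq', Finset.mem_univ, if_true]
  rw [Finset.sum_mul]
  congr 1; ext k; ring

lemma kvMat_add {αI : Type*} {q n : ℕ} (v w : αI → ℝ) (N : Matrix (Fin q) (Fin n) ℝ) :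
    kvMat (v + w) N = kvMat v N + kvMat w N := by
  ext ⟨i, r⟩ j
  simp [kvMat, add_mul]

lemma psdSqrt_mul_inv_of_posDef {m : ℕ} {X : Matrix (Fin m) (Fin m) ℝ} (hX : X.PosDef) :
    psdSqrt X * (psdSqrt X)⁻¹ = 1 := by
  have hpsd : X.PosSemidef := hX.posSemidef
  rw [psdSqrt, dif_pos hpsd]
  apply Matrix.mul_nonsing_inv
  rw [← Matrix.isUnit_iff_isUnit_det]
  have hU : (star hpsd.1.eigenvectorUnitary : Matrix (Fin m) (Fin m) ℝ) * (hpsd.1.eigenvectorUnitary : Matrix (Fin m) (Fin m) ℝ) = 1 :=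
    (hpsd.1.eigenvectorUnitary).2.1
  have hU' : (hpsd.1.eigenvectorUnitary : Matrix (Fin m) (Fin m) ℝ) * (star hpsd.1.eigenvectorUnitary : Matrix (Fin m) (Fin m) ℝ) = 1 :=
    (hpsd.1.eigenvectorUnitary).2.2
  refine (IsUnit.mul (IsUnit.mul ⟨⟨_, _, hU', hU⟩, rfl⟩ ?_) ⟨⟨_, _, hU, hU'⟩, rfl⟩)
  rw [Matrix.isUnit_diagonal, Pi.isUnit_iff]
  intro i
  have := hX.eigenvalues_pos i
  exact (ne_of_gt (by simpa using Real.sqrt_pos.mpr this)).isUnit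

/-- **identity (17) of the paper.** With `T = Γ̂ √𝔥` and
`T̃ = Ĩ √𝔈`, for any `Â, B̂, K` and every `τ ∈ [a,b]`:
`[Â + B̂ (I_κ ⊗ K)] (g(τ) ⊗ Iₙ)
  = [Â (T ⊗ Iₙ) + B̂ (T ⊗ K)] (√𝔥⁻¹ h(τ) ⊗ Iₙ)
  + [Â (T̃ ⊗ Iₙ) + B̂ (T̃ ⊗ K)] (√𝔈⁻¹ ε(τ) ⊗ Iₙ)`. -/
theorem ksd_delay_kernel_factorization
    (μ ϰ n p : ℕ) (a b : ℝ) (hab : a < b)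
    (ϕ : ℝ → Fin μ → ℝ) (h : ℝ → Fin ϰ → ℝ)
    (hϕmeas : ∀ i, Measurable fun τ => ϕ τ i)
    (hhmeas : ∀ i, Measurable fun τ => h τ i)
    (hϕL2 : ∀ i, MemLp (fun τ => ϕ τ i) 2 (volume.restrict (Set.Icc a b)))
    (hhL2 : ∀ i, MemLp (fun τ => h τ i) 2 (volume.restrict (Set.Icc a b)))
    (𝔥 : Matrix (Fin ϰ) (Fin ϰ) ℝ) (h𝔥 : 𝔥 = gramOn a b h h) (h𝔥pd : 𝔥.PosDef)
    (Γ : Matrix (Fin μ) (Fin ϰ) ℝ) (hΓ : Γ = gramOn a b ϕ h)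
    (𝔈 : Matrix (Fin μ) (Fin μ) ℝ)
    (h𝔈 : 𝔈 = gramOn a b ϕ ϕ - Γ * 𝔥⁻¹ * Γᵀ) (h𝔈pd : 𝔈.PosDef)
    (ε : ℝ → Fin μ → ℝ) (hε : ∀ τ, ε τ = ϕ τ - (Γ * 𝔥⁻¹) *ᵥ h τ)
    (Γhat : Matrix (Fin μ ⊕ Fin ϰ) (Fin ϰ) ℝ)
    (hΓhat : Γhat = Matrix.fromRows (Γ * 𝔥⁻¹) (1 : Matrix (Fin ϰ) (Fin ϰ) ℝ))
    (Itil : Matrix (Fin μ ⊕ Fin ϰ) (Fin μ) ℝ)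
    (hItil : Itil = Matrix.fromRows (1 : Matrix (Fin μ) (Fin μ) ℝ) (0 : Matrix (Fin ϰ) (Fin μ) ℝ))
    (T : Matrix (Fin μ ⊕ Fin ϰ) (Fin ϰ) ℝ) (hT : T = Γhat * psdSqrt 𝔥)
    (Ttil : Matrix (Fin μ ⊕ Fin ϰ) (Fin μ) ℝ) (hTtil : Ttil = Itil * psdSqrt 𝔈)
    (Ahat : Matrix (Fin n) ((Fin μ ⊕ Fin ϰ) × Fin n) ℝ)
    (Bhat : Matrix (Fin n) ((Fin μ ⊕ Fin ϰ) × Fin p) ℝ)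
    (K : Matrix (Fin p) (Fin n) ℝ) :
    ∀ τ ∈ Set.Icc a b,
      (Ahat + Bhat * ((1 : Matrix (Fin μ ⊕ Fin ϰ) (Fin μ ⊕ Fin ϰ) ℝ) ⊗ₖ K)) *
          vecKronId (Sum.elim (ϕ τ) (h τ)) n =
        (Ahat * (T ⊗ₖ (1 : Matrix (Fin n) (Fin n) ℝ)) + Bhat * (T ⊗ₖ K)) *
            vecKronId ((psdSqrt 𝔥)⁻¹ *ᵥ h τ) n +
          (Ahat * (Ttil ⊗ₖ (1 : Matrix (Fin n) (Fin n) ℝ)) + Bhat * (Ttil ⊗ₖ K)) *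
            vecKronId ((psdSqrt 𝔈)⁻¹ *ᵥ ε τ) n := by
  intro τ hτ
  -- abbreviations
  have hsq𝔥 : psdSqrt 𝔥 * (psdSqrt 𝔥)⁻¹ = 1 := psdSqrt_mul_inv_of_posDef h𝔥pd
  have hsq𝔈 : psdSqrt 𝔈 * (psdSqrt 𝔈)⁻¹ = 1 := psdSqrt_mul_inv_of_posDef h𝔈pd
  have hTv : T *ᵥ ((psdSqrt 𝔥)⁻¹ *ᵥ h τ) = Γhat *ᵥ h τ := by
    rw [Matrix.mulVec_mulVec, hT, Matrix.mul_assoc, hsq𝔥, Matrix.mul_one]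
  have hTtv : Ttil *ᵥ ((psdSqrt 𝔈)⁻¹ *ᵥ ε τ) = Itil *ᵥ ε τ := by
    rw [Matrix.mulVec_mulVec, hTtil, Matrix.mul_assoc, hsq𝔈, Matrix.mul_one]
  have hg : Sum.elim (ϕ τ) (h τ) = Γhat *ᵥ h τ + Itil *ᵥ ε τ := by
    funext x
    cases x with
    | inl i =>
        simp [hΓhat, hItil, Matrix.fromRows_mulVec, hε τ, Matrix.one_mulVec]
    | inr i =>
        simp [hΓhat, hItil, Matrix.fromRows_mulVec, Matrix.one_mulVec,
          Matrix.zero_mulVec]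
  rw [Matrix.add_mul, Matrix.add_mul, Matrix.add_mul, Matrix.mul_assoc, Matrix.mul_assoc,
    Matrix.mul_assoc, Matrix.mul_assoc, Matrix.mul_assoc,
    kron_mul_vecKronId, kron_mul_vecKronId, kron_mul_vecKronId,
    kron_mul_vecKronId, kron_mul_vecKronId, hTv, hTtv,
    vecKronId_eq_kvMat, hg, Matrix.one_mulVec, kvMat_add, kvMat_add]
  simp only [Matrix.mul_add]
  abel
end

section
/- Let P, P̃, N, Ñ ∈ ℝ^{n×k} be real matrices and let Z ∈ ℝ^{n×n} be symmetric positive definite. Define Sy(X) = X + Xᵀ. Then Sy(PᵀN) ⪯ Sy(P̃ᵀN + PᵀÑ − P̃ᵀÑ) + (P − P̃)ᵀ Z (P − P̃) + (N − Ñ)ᵀ Z⁻¹ (N − Ñ), i.e., the difference of the right-hand side and the left-hand side is a positive semidefinite k × k matrix. -/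
open Matrix

/-- **inner convex approximation bound.** For any matrices
`P, P̃, N, Ñ ∈ ℝ^{n×k}` and `Z ≻ 0`, with `Sy(X) = X + Xᵀ`:
`Sy(PᵀN) ⪯ Sy(P̃ᵀN + PᵀÑ − P̃ᵀÑ) + (P−P̃)ᵀ Z (P−P̃) + (N−Ñ)ᵀ Z⁻¹ (N−Ñ)`. -/
theorem inner_convex_approximation_bound
    (n k : ℕ) (P Ptil N Ntil : Matrix (Fin n) (Fin k) ℝ)
    (Z : Matrix (Fin n) (Fin n) ℝ) (hZ : Z.PosDef) :
    (((Ptilᵀ * N + Pᵀ * Ntil - Ptilᵀ * Ntil) +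
        (Ptilᵀ * N + Pᵀ * Ntil - Ptilᵀ * Ntil)ᵀ) +
      (P - Ptil)ᵀ * Z * (P - Ptil) + (N - Ntil)ᵀ * Z⁻¹ * (N - Ntil) -
      (Pᵀ * N + (Pᵀ * N)ᵀ)).PosSemidef := by
  set A := P - Ptil with hA
  set B := N - Ntil with hB
  set S := (open scoped MatrixOrder in CFC.sqrt Z) with hS
  have hSsym : Sᵀ = S := by
    have := (open scoped MatrixOrder in (CFC.sqrt_nonneg Z).posSemidef).isHermitian
    simpa [conjTranspose_eq_transpose_of_trivial, Matrix.IsSymm] using this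
  have hSS : S * S = Z := open scoped MatrixOrder in CFC.sqrt_mul_sqrt_self Z hZ.posSemidef.nonneg
  have hSdet : IsUnit S.det := by
    have hzd : Z.det ≠ 0 := ne_of_gt hZ.det_pos
    rw [← hSS, det_mul] at hzd
    exact isUnit_iff_ne_zero.mpr (left_ne_zero_of_mul hzd)
  have hSinv : S * S⁻¹ = 1 := mul_nonsing_inv S hSdet
  have hSinv' : S⁻¹ * S = 1 := nonsing_inv_mul S hSdet
  have hSinvT : (S⁻¹)ᵀ = S⁻¹ := by rw [transpose_nonsing_inv, hSsym]
  have hZinv : S⁻¹ * S⁻¹ = Z⁻¹ := by rw [← hSS, Matrix.mul_inv_rev]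
  have e1 : Aᵀ * S * (S * A) = Aᵀ * Z * A := by
    rw [Matrix.mul_assoc, ← Matrix.mul_assoc S, hSS, ← Matrix.mul_assoc]
  have e2 : Bᵀ * S⁻¹ * (S⁻¹ * B) = Bᵀ * Z⁻¹ * B := by
    rw [Matrix.mul_assoc, ← Matrix.mul_assoc S⁻¹, hZinv, ← Matrix.mul_assoc]
  have e3 : Aᵀ * S * (S⁻¹ * B) = Aᵀ * B := by
    rw [Matrix.mul_assoc, ← Matrix.mul_assoc S, hSinv, Matrix.one_mul]
  have e4 : Bᵀ * S⁻¹ * (S * A) = Bᵀ * A := by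
    rw [Matrix.mul_assoc, ← Matrix.mul_assoc S⁻¹, hSinv', Matrix.one_mul]
  clear_value A B S
  have expand : (S * A - S⁻¹ * B)ᵀ * (S * A - S⁻¹ * B) =
      Aᵀ * Z * A + Bᵀ * Z⁻¹ * B - Aᵀ * B - Bᵀ * A := by
    rw [transpose_sub, transpose_mul, transpose_mul, hSsym, hSinvT,
      Matrix.sub_mul, Matrix.mul_sub, Matrix.mul_sub, e1, e2, e3, e4]
    abel
  have key2 : (((Ptilᵀ * N + Pᵀ * Ntil - Ptilᵀ * Ntil) +
        (Ptilᵀ * N + Pᵀ * Ntil - Ptilᵀ * Ntil)ᵀ) +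
      Aᵀ * Z * A + Bᵀ * Z⁻¹ * B -
      (Pᵀ * N + (Pᵀ * N)ᵀ)) =
      Aᵀ * Z * A + Bᵀ * Z⁻¹ * B - Aᵀ * B - Bᵀ * A := by
    rw [hA, hB]
    simp only [Matrix.sub_mul, Matrix.mul_sub, transpose_sub, transpose_mul,
      transpose_add, transpose_transpose]
    abel
  rw [key2, ← expand]
  have h := posSemidef_conjTranspose_mul_self (S * A - S⁻¹ * B)
  rwa [conjTranspose_eq_transpose_of_trivial] at h
end

section
/- Let Φ ∈ ℝ^{k×k} be symmetric, let P, P̃, N, Ñ ∈ ℝ^{n×k}, and let Z ∈ ℝ^{n×n} be symmetric positive definite. If Φ + Sy(P̃ᵀN + PᵀÑ − P̃ᵀÑ) + (P − P̃)ᵀ Z (P − P̃) + (N − Ñ)ᵀ Z⁻¹ (N − Ñ) ≺ 0 (negative definite), then Φ + Sy(PᵀN) ≺ 0. -/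
open Matrix

/-- **the convexified inequality implies the BMI.** If `Φ` is
symmetric, `Z ≻ 0`, and
`Φ + Sy(P̃ᵀN + PᵀÑ − P̃ᵀÑ) + (P−P̃)ᵀ Z (P−P̃) + (N−Ñ)ᵀ Z⁻¹ (N−Ñ) ≺ 0`,
then `Φ + Sy(PᵀN) ≺ 0`. -/
theorem convexified_implies_bmi
    (n k : ℕ) (Φ : Matrix (Fin k) (Fin k) ℝ) (hΦ : Φ.IsHermitian)
    (P Ptil N Ntil : Matrix (Fin n) (Fin k) ℝ)
    (Z : Matrix (Fin n) (Fin n) ℝ) (hZ : Z.PosDef)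
    (hyp : (-(Φ + ((Ptilᵀ * N + Pᵀ * Ntil - Ptilᵀ * Ntil) +
          (Ptilᵀ * N + Pᵀ * Ntil - Ptilᵀ * Ntil)ᵀ) +
        (P - Ptil)ᵀ * Z * (P - Ptil) + (N - Ntil)ᵀ * Z⁻¹ * (N - Ntil))).PosDef) :
    (-(Φ + (Pᵀ * N + (Pᵀ * N)ᵀ))).PosDef := by
  have hZt : Zᵀ = Z := hZ.isHermitian
  have hdet : IsUnit Z.det := isUnit_iff_ne_zero.mpr hZ.det_pos.ne'
  have hinv : Z * Z⁻¹ = 1 := mul_nonsing_inv Z hdet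
  have hZit : Z⁻¹ᵀ = Z⁻¹ := by
    rw [← hZt, transpose_nonsing_inv, transpose_transpose, hZt]
  rw [posDef_iff_dotProduct_mulVec]
  constructor
  · -- Hermitian
    have : ((Pᵀ * N) + (Pᵀ * N)ᴴ).IsHermitian := isHermitian_add_transpose_self _
    rw [conjTranspose_eq_transpose_of_trivial] at this
    exact (hΦ.add this).neg
  · intro c hc
    have hpos := hyp.dotProduct_mulVec_pos hc
    set ΔP := P - Ptil with hΔP
    set ΔN := N - Ntil with hΔN
    set x := ΔP *ᵥ c with hx
    set y := ΔN *ᵥ c with hy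
    -- quadratic form identities
    have quad : ∀ (A B : Matrix (Fin n) (Fin k) ℝ) (M : Matrix (Fin n) (Fin n) ℝ),
        c ⬝ᵥ (Aᵀ * M * B) *ᵥ c = (A *ᵥ c) ⬝ᵥ M *ᵥ (B *ᵥ c) := by
      intro A B M
      rw [← mulVec_mulVec, ← mulVec_mulVec, dotProduct_mulVec, vecMul_transpose]
    have quad2 : ∀ (A B : Matrix (Fin n) (Fin k) ℝ),
        c ⬝ᵥ (Aᵀ * B) *ᵥ c = (A *ᵥ c) ⬝ᵥ (B *ᵥ c) := by
      intro A B
      rw [← mulVec_mulVec, dotProduct_mulVec, vecMul_transpose]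
    -- the slack term is nonneg via (x - Z⁻¹y)ᵀ Z (x - Z⁻¹y) ≥ 0
    have e1 : Z *ᵥ (Z⁻¹ *ᵥ y) = y := by rw [mulVec_mulVec, hinv, one_mulVec]
    have e2 : (Z⁻¹ *ᵥ y) ⬝ᵥ Z *ᵥ x = y ⬝ᵥ x := by
      rw [dotProduct_mulVec, vecMul_mulVec, hZit, nonsing_inv_mul Z hdet, vecMul_one]
    have e3 : (Z⁻¹ *ᵥ y) ⬝ᵥ Z *ᵥ (Z⁻¹ *ᵥ y) = y ⬝ᵥ Z⁻¹ *ᵥ y := by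
      rw [e1, dotProduct_comm]
    have h0 : 0 ≤ (x - Z⁻¹ *ᵥ y) ⬝ᵥ Z *ᵥ (x - Z⁻¹ *ᵥ y) := hZ.posSemidef.dotProduct_mulVec_nonneg _
    have expand : (x - Z⁻¹ *ᵥ y) ⬝ᵥ Z *ᵥ (x - Z⁻¹ *ᵥ y)
        = x ⬝ᵥ Z *ᵥ x + y ⬝ᵥ Z⁻¹ *ᵥ y - (x ⬝ᵥ y + y ⬝ᵥ x) := by
      rw [mulVec_sub, dotProduct_sub, sub_dotProduct, sub_dotProduct, e1, e2,
        dotProduct_comm (Z⁻¹ *ᵥ y) y]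
      ring
    have slack : x ⬝ᵥ y + y ⬝ᵥ x ≤ x ⬝ᵥ Z *ᵥ x + y ⬝ᵥ Z⁻¹ *ᵥ y := by linarith [expand ▸ h0]
    -- key matrix identity
    have key : -(Φ + (Pᵀ * N + (Pᵀ * N)ᵀ)) =
        (-(Φ + ((Ptilᵀ * N + Pᵀ * Ntil - Ptilᵀ * Ntil) +
            (Ptilᵀ * N + Pᵀ * Ntil - Ptilᵀ * Ntil)ᵀ) +
          ΔPᵀ * Z * ΔP + ΔNᵀ * Z⁻¹ * ΔN)) +
        (ΔPᵀ * Z * ΔP + ΔNᵀ * Z⁻¹ * ΔN - (ΔPᵀ * ΔN + ΔNᵀ * ΔP)) := by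
      simp only [hΔP, hΔN, transpose_sub, transpose_add, transpose_mul, transpose_transpose,
        Matrix.sub_mul, Matrix.mul_sub]
      noncomm_ring
    have scalc : star c ⬝ᵥ (-(Φ + (Pᵀ * N + (Pᵀ * N)ᵀ))) *ᵥ c
        = star c ⬝ᵥ (-(Φ + ((Ptilᵀ * N + Pᵀ * Ntil - Ptilᵀ * Ntil) +
            (Ptilᵀ * N + Pᵀ * Ntil - Ptilᵀ * Ntil)ᵀ) +
          ΔPᵀ * Z * ΔP + ΔNᵀ * Z⁻¹ * ΔN)) *ᵥ c
          + (x ⬝ᵥ Z *ᵥ x + y ⬝ᵥ Z⁻¹ *ᵥ y - (x ⬝ᵥ y + y ⬝ᵥ x)) := by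
      have hsc : star c = c := by ext i; simp
      rw [hsc, key]
      simp only [add_mulVec, sub_mulVec, dotProduct_add, dotProduct_sub, quad, quad2]
      rfl
    rw [scalc]
    have : 0 ≤ x ⬝ᵥ Z *ᵥ x + y ⬝ᵥ Z⁻¹ *ᵥ y - (x ⬝ᵥ y + y ⬝ᵥ x) := by linarith
    linarith [hpos]
end
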